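/- Every extended quota majority method φ_𝐤 is non-manipulable: for every voter v, every profile P, and every alternative deviation Q_v of voter v's reported preference, the outcome φ_𝐤(P) is weakly preferred, according to voter v's true (reported) preference P_v, to the outcome φ_𝐤 when v reports Q_v instead (with all other reports unchanged). -/

import Mathlib

/-- Number of voters preferring alternative `a`. -/
def countA (n : ℕ) (P : Fin n → Option Bool) : ℕ :=
  (Finset.univ.filter fun v => P v = some true).card

/-- Number of voters preferring alternative `b`. -/
def countB (n : ℕ) (P : Fin n → Option Bool) : ℕ :=
  (Finset.univ.filter fun v => P v = some false).card

/-- The defining condition at quota `k`: at least `k` voters prefer `a`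
or at least `n + 1 - k` voters prefer `b`. -/
def hits (n : ℕ) (P : Fin n → Option Bool) (k : ℕ) : Bool :=
  decide (k ≤ countA n P ∨ n + 1 - k ≤ countB n P)

/-- The (generalized) extended quota majority method attached to a list of quotas:
find the least index whose quota condition holds, and output `true` (= a) iff the
a-branch of that condition holds. -/
def phi (n : ℕ) (l : List ℕ) (P : Fin n → Option Bool) : Bool :=
  decide (l.getD (l.findIdx (hits n P)) (n + 1) ≤ countA n P)

/-- A valid tuple for an extended quota majority method: nonempty, distinct entries
from `{0, …, n+1}`, last entry in `{0, n+1}`. -/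
def Valid (n : ℕ) (l : List ℕ) : Prop :=
  l ≠ [] ∧ l.Nodup ∧ (∀ x ∈ l, x ≤ n + 1) ∧
    (l.getLast? = some 0 ∨ l.getLast? = some (n + 1))

lemma hits_exists (n : ℕ) (l : List ℕ) (hv : Valid n l) (P : Fin n → Option Bool) :
    ∃ k ∈ l, hits n P k = true := by
  obtain ⟨hne, -, -, hlast⟩ := hv
  rcases hlast with h | h
  · exact ⟨0, List.mem_of_getLast? h, by simp [hits]⟩
  · exact ⟨n + 1, List.mem_of_getLast? h, by simp [hits]⟩

lemma count_mono (n : ℕ) (P : Fin n → Option Bool) (v : Fin n) (q : Option Bool)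
    (x : Bool) (h : P v = some x) :
    (Finset.univ.filter fun w => Function.update P v q w = some x).card ≤
      (Finset.univ.filter fun w => P w = some x).card := by
  apply Finset.card_le_card
  intro w hw
  simp only [Finset.mem_filter, Finset.mem_univ, true_and] at hw ⊢
  rcases eq_or_ne w v with rfl | hne
  · exact h
  · rwa [Function.update_of_ne hne] at hw

lemma count_mono' (n : ℕ) (P : Fin n → Option Bool) (v : Fin n) (q : Option Bool)
    (x : Bool) (h : P v = some x) :
    (Finset.univ.filter fun w => P w = some !x).card ≤
      (Finset.univ.filter fun w => Function.update P v q w = some !x).card := by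
  apply Finset.card_le_card
  intro w hw
  simp only [Finset.mem_filter, Finset.mem_univ, true_and] at hw ⊢
  have hne : w ≠ v := by rintro rfl; rw [h] at hw; simp at hw
  rwa [Function.update_of_ne hne]

lemma phi_mono (n : ℕ) (l : List ℕ) (hv : Valid n l)
    (P Q : Fin n → Option Bool)
    (hA : countA n Q ≤ countA n P) (hB : countB n P ≤ countB n Q)
    (h : phi n l Q = true) : phi n l P = true := by
  have hQlt := List.findIdx_lt_length_of_exists (hits_exists n l hv Q)
  have hPlt := List.findIdx_lt_length_of_exists (hits_exists n l hv P)
  set iQ := l.findIdx (hits n Q) with hiQ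
  set iP := l.findIdx (hits n P) with hiP
  unfold phi at h ⊢
  rw [List.getD_eq_getElem l _ hQlt] at h
  rw [List.getD_eq_getElem l _ hPlt]
  simp only [decide_eq_true_eq] at h ⊢
  have h1 : l[iQ] ≤ countA n P := le_trans h hA
  have hle : iP ≤ iQ := by
    by_contra hc
    push_neg at hc
    have := List.not_of_lt_findIdx (p := hits n P) (xs := l) (i := iQ) hc
    simp only [hits, decide_eq_false_iff_not, not_or, not_le] at this
    exact absurd h1 (not_le.mpr this.1)
  have hPiP : hits n P (l[iP]'hPlt) = true := List.findIdx_getElem (w := hPlt)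
  simp only [hits, decide_eq_true_eq] at hPiP
  rcases hPiP with hA' | hB'
  · exact hA'
  · have hQiP : hits n Q (l[iP]'(lt_of_le_of_lt hle hQlt)) = true := by
      simp only [hits, decide_eq_true_eq]
      exact Or.inr (le_trans hB' hB)
    have hge : iQ ≤ iP := by
      by_contra hc
      push_neg at hc
      have := List.not_of_lt_findIdx (p := hits n Q) (xs := l) (i := iP) hc
      rw [this] at hQiP; exact absurd hQiP (by simp)
    have heq : iP = iQ := le_antisymm hle hge
    have : l[iP]'hPlt = l[iQ]'hQlt := by simp [heq]
    rw [this]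
    exact h1

/-- extended quota majority methods are non-manipulable: a voter whose
report is a strict preference for `x` and who, by deviating, would obtain outcome `x`,
already obtains outcome `x` by reporting truthfully. -/
theorem stmt_5 (n : ℕ) (hn : 1 ≤ n) (l : List ℕ) (hv : Valid n l) :
    ∀ (v : Fin n) (P : Fin n → Option Bool) (q : Option Bool) (x : Bool),
      P v = some x → phi n l (Function.update P v q) = x → phi n l P = x := by
  intro v P q x hx h
  cases x with
  | true =>
    exact phi_mono n l hv P (Function.update P v q)
      (count_mono n P v q true hx)
      (by simpa [countB] using count_mono' n P v q true hx) h
  | false =>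
    -- phi Q = false; show phi P = false. Equivalently contrapositive via phi_mono
    -- with roles: countA P ≤ countA Q, countB Q ≤ countB P, phi P = true → phi Q = true.
    by_contra hc
    have hPt : phi n l P = true := by
      cases hP : phi n l P
      · exact absurd hP hc
      · rfl
    have : phi n l (Function.update P v q) = true := by
      apply phi_mono n l hv (Function.update P v q) P
      · -- countA n P ≤ countA n (update)
        simpa [countA] using count_mono' n P v q false hx
      · -- countB n (update) ≤ countB n P
        exact count_mono n P v q false hx
      · exact hPt
    simp [this] at h
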